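/- Let p : ℝ^{m_1} × ... × ℝ^{m_ℓ} → ℝ be a polynomial. Then there exists a single-player imperfect-recall extensive-form game, constructed as follows, whose expected utility equals p: a chance root with one branch per monomial of p chosen uniformly at random, and for the monomial λ_D · ∏_{j,a} (x^j_a)^{D^j_a} a path of length |D| = Σ D^j_a of decision nodes, where each occurrence of (j,a) contributes a decision node in infoset j whose action a continues the path (all other actions lead to payoff-0 leaves), terminating at a leaf with payoff λ_D times the number of monomials. Under behavioral strategy μ with μ(a | I_j) = x^j_a, the expected utility is exactly p(x). In particular, the reach probability of the terminal leaf for monomial D equals (1/N) · ∏_{j,a} (x^j_a)^{D^j_a}, where N is the number of monomials in the support of p. -/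
import Mathlib


/-- A single-player extensive-form game tree with infosets `j : Fin ℓ`, the infoset `j`
having `m j` actions.  Nodes are chance nodes (with a distribution over children),
decision nodes (belonging to some infoset `j`, with one child per action), or payoff
leaves.  Since a tree may contain several decision nodes of the same infoset (possibly
along one history), this models imperfect recall and absentmindedness. -/
inductive GameTree (ℓ : ℕ) (m : Fin ℓ → ℕ) : Type where
  | leaf : ℝ → GameTree ℓ m
  | chance : (k : ℕ) → (Fin k → ℝ) → (Fin k → GameTree ℓ m) → GameTree ℓ m
  | decision : (j : Fin ℓ) → (Fin (m j) → GameTree ℓ m) → GameTree ℓ m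

/-- The chance distributions of the tree are genuine probability distributions. -/
def GameTree.validChance {ℓ : ℕ} {m : Fin ℓ → ℕ} : GameTree ℓ m → Prop
  | .leaf _ => True
  | .chance k prob ch => (∀ i, 0 ≤ prob i) ∧ (∑ i, prob i = 1) ∧ ∀ i, (ch i).validChance
  | .decision _ ch => ∀ a, (ch a).validChance

/-- Expected utility of a behavioral strategy `μ` (a distribution over the `m j` actions
at each infoset `j`): sum over leaves of reach probability times payoff, computed
recursively. -/
noncomputable def GameTree.expectedUtility {ℓ : ℕ} {m : Fin ℓ → ℕ} :
    GameTree ℓ m → ((j : Fin ℓ) → Fin (m j) → ℝ) → ℝ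
  | .leaf c, _ => c
  | .chance _ prob ch, μ => ∑ i, prob i * (ch i).expectedUtility μ
  | .decision j ch, μ => ∑ a, μ j a * (ch a).expectedUtility μ

namespace GameTree

/-- Scale all leaf payoffs by `r`. -/
noncomputable def smul {ℓ : ℕ} {m : Fin ℓ → ℕ} (r : ℝ) : GameTree ℓ m → GameTree ℓ m
  | .leaf c => .leaf (r * c)
  | .chance k prob ch => .chance k prob (fun i => (ch i).smul r)
  | .decision j ch => .decision j (fun a => (ch a).smul r)

/-- Multiply the tree's utility by the variable `μ v.1 v.2` by appending a decision
node of infoset `v.1` at each leaf, with action `v.2` continuing to the leaf. -/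
noncomputable def mulVar {ℓ : ℕ} {m : Fin ℓ → ℕ} (v : (j : Fin ℓ) × Fin (m j)) :
    GameTree ℓ m → GameTree ℓ m
  | .leaf c => .decision v.1 (fun b => if b = v.2 then .leaf c else .leaf 0)
  | .chance k prob ch => .chance k prob (fun i => (ch i).mulVar v)
  | .decision j ch => .decision j (fun a => (ch a).mulVar v)

/-- Add two trees via a fair coin chance node with payoffs doubled. -/
noncomputable def addT {ℓ : ℕ} {m : Fin ℓ → ℕ} (T₁ T₂ : GameTree ℓ m) : GameTree ℓ m :=
  .chance 2 (fun _ => (1:ℝ)/2) ![T₁.smul 2, T₂.smul 2]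

theorem smul_valid {ℓ : ℕ} {m : Fin ℓ → ℕ} (r : ℝ) :
    ∀ T : GameTree ℓ m, T.validChance → (T.smul r).validChance
  | .leaf _, _ => trivial
  | .chance k prob ch, ⟨h1, h2, h3⟩ => ⟨h1, h2, fun i => smul_valid r (ch i) (h3 i)⟩
  | .decision j ch, h => fun a => smul_valid r (ch a) (h a)

theorem smul_eu {ℓ : ℕ} {m : Fin ℓ → ℕ} (r : ℝ) :
    ∀ (T : GameTree ℓ m) (μ), (T.smul r).expectedUtility μ = r * T.expectedUtility μ
  | .leaf _, _ => rfl
  | .chance k prob ch, μ => by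
      simp only [smul, expectedUtility, Finset.mul_sum]
      exact Finset.sum_congr rfl fun i _ => by rw [smul_eu r (ch i) μ]; ring
  | .decision j ch, μ => by
      simp only [smul, expectedUtility, Finset.mul_sum]
      exact Finset.sum_congr rfl fun a _ => by rw [smul_eu r (ch a) μ]; ring

theorem mulVar_valid {ℓ : ℕ} {m : Fin ℓ → ℕ} (v : (j : Fin ℓ) × Fin (m j)) :
    ∀ T : GameTree ℓ m, T.validChance → (T.mulVar v).validChance
  | .leaf _, _ => fun b => by dsimp only; split <;> trivial
  | .chance k prob ch, ⟨h1, h2, h3⟩ => ⟨h1, h2, fun i => mulVar_valid v (ch i) (h3 i)⟩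
  | .decision j ch, h => fun a => mulVar_valid v (ch a) (h a)

theorem mulVar_eu {ℓ : ℕ} {m : Fin ℓ → ℕ} (v : (j : Fin ℓ) × Fin (m j)) :
    ∀ (T : GameTree ℓ m) (μ),
      (T.mulVar v).expectedUtility μ = μ v.1 v.2 * T.expectedUtility μ
  | .leaf c, μ => by
      simp only [mulVar, expectedUtility]
      rw [Finset.sum_eq_single v.2]
      · simp [expectedUtility]
      · intro b _ hb; simp [hb, expectedUtility]
      · simp
  | .chance k prob ch, μ => by
      simp only [mulVar, expectedUtility, Finset.mul_sum]
      exact Finset.sum_congr rfl fun i _ => by rw [mulVar_eu v (ch i) μ]; ring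
  | .decision j ch, μ => by
      simp only [mulVar, expectedUtility, Finset.mul_sum]
      exact Finset.sum_congr rfl fun a _ => by rw [mulVar_eu v (ch a) μ]; ring

theorem addT_valid {ℓ : ℕ} {m : Fin ℓ → ℕ} (T₁ T₂ : GameTree ℓ m)
    (h₁ : T₁.validChance) (h₂ : T₂.validChance) : (T₁.addT T₂).validChance := by
  refine ⟨fun i => by norm_num, by norm_num, fun i => ?_⟩
  fin_cases i
  · exact smul_valid 2 T₁ h₁
  · exact smul_valid 2 T₂ h₂

theorem addT_eu {ℓ : ℕ} {m : Fin ℓ → ℕ} (T₁ T₂ : GameTree ℓ m) (μ) :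
    (T₁.addT T₂).expectedUtility μ = T₁.expectedUtility μ + T₂.expectedUtility μ := by
  simp [addT, expectedUtility, Fin.sum_univ_two, smul_eu]

end GameTree

/-- Every polynomial `p` in the behavioral-strategy variables `x^j_a` is the expected
utility of some single-player imperfect-recall extensive-form game: there is a game tree
(with valid chance probabilities) whose expected utility under the behavioral strategy
`μ` equals `p(μ)` for every `μ`. -/
theorem stmt11 (ℓ : ℕ) (m : Fin ℓ → ℕ)
    (p : MvPolynomial ((j : Fin ℓ) × Fin (m j)) ℝ) :
    ∃ T : GameTree ℓ m, T.validChance ∧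
      ∀ μ : (j : Fin ℓ) → Fin (m j) → ℝ,
        T.expectedUtility μ = MvPolynomial.eval (fun v => μ v.1 v.2) p := by
  induction p using MvPolynomial.induction_on with
  | C r =>
      exact ⟨.leaf r, trivial, fun μ => by simp [GameTree.expectedUtility]⟩
  | add p q hp hq =>
      obtain ⟨T₁, v₁, e₁⟩ := hp
      obtain ⟨T₂, v₂, e₂⟩ := hq
      exact ⟨T₁.addT T₂, GameTree.addT_valid T₁ T₂ v₁ v₂,
        fun μ => by rw [GameTree.addT_eu, e₁, e₂, map_add]⟩
  | mul_X p v hp =>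
      obtain ⟨T, vT, eT⟩ := hp
      exact ⟨T.mulVar v, GameTree.mulVar_valid v T vT,
        fun μ => by rw [GameTree.mulVar_eu, eT, map_mul, MvPolynomial.eval_X]; ring⟩
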